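/- Let Δ ≥ 0 and let H be an n-vertex graph with maximum degree at most Δ. Then there exist t ≤ 300·√(Δn) matchings M₁, …, M_t in H such that (M1) every edge of H belongs to exactly two of the matchings, and (M2) for all 1 ≤ i < j ≤ t the matchings Mᵢ and Mⱼ have at most one edge in common. -/

import Mathlib

open SimpleGraph

/-- `M` is a matching in `H`: a set of pairwise non-adjacent edges of `H`. -/
def IsMatchingIn {n : ℕ} (H : SimpleGraph (Fin n)) (M : Finset (Sym2 (Fin n))) : Prop :=
  (↑M : Set (Sym2 (Fin n))) ⊆ H.edgeSet ∧
  ∀ e ∈ M, ∀ f ∈ M, e ≠ f → ∀ v : Fin n, v ∈ e → v ∉ f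

open Finset in
lemma exists_coloring {n : ℕ} (H : SimpleGraph (Fin n)) (D s : ℕ)
    (hdeg : ∀ v : Fin n, (H.neighborSet v).ncard ≤ D)
    (hm : H.edgeSet.ncard ≤ s * (s + 1)) :
    ∀ l : List (Sym2 (Fin n)), l.Nodup → (∀ e ∈ l, e ∈ H.edgeSet) →
    ∃ c : Sym2 (Fin n) → ℕ × ℕ,
      (∀ e ∈ l, (c e).1 < 2*D + s + 1) ∧
      (∀ e ∈ l, 2*D + s + 1 ≤ (c e).2 ∧ (c e).2 < 2*(2*D + s + 1)) ∧
      (∀ e ∈ l, ∀ f ∈ l, (∃ v : Fin n, v ∈ e ∧ v ∈ f) → e ≠ f →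
        (c e).1 ≠ (c f).1 ∧ (c e).2 ≠ (c f).2) ∧
      (∀ e ∈ l, ∀ f ∈ l, e ≠ f → c e ≠ c f) := by
  classical
  intro l
  induction l with
  | nil => exact fun _ _ => ⟨fun _ => (0,0), by simp, by simp, by simp, by simp⟩
  | cons e l ih =>
    intro hnd hmem
    obtain ⟨c, h1, h2, h3, h4⟩ := ih hnd.of_cons (fun f hf => hmem f (List.mem_cons_of_mem _ hf))
    have henl : e ∉ l := (List.nodup_cons.mp hnd).1
    have heE : e ∈ H.edgeSet := hmem e (List.mem_cons_self (a := e) (l := l))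
    set K := 2*D + s + 1 with hK
    -- the set of edges of l adjacent to e
    set Adj : Finset (Sym2 (Fin n)) :=
      l.toFinset.filter (fun f => ∃ v : Fin n, v ∈ e ∧ v ∈ f) with hAdj
    have hAdjcard : Adj.card ≤ 2 * D := by
      obtain ⟨⟨u, v⟩, rfl⟩ := e.exists_rep
      have hsub : Adj ⊆ H.incidenceFinset u ∪ H.incidenceFinset v := by
        intro f hf
        rw [hAdj, mem_filter] at hf
        obtain ⟨hfl, w, hwe, hwf⟩ := hf
        have hfE : f ∈ H.edgeSet := hmem f (List.mem_cons_of_mem _ (List.mem_toFinset.mp hfl))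
        rw [Sym2.mem_iff] at hwe
        rcases hwe with rfl | rfl
        · exact mem_union_left _ (by rw [mem_incidenceFinset]; exact ⟨hfE, hwf⟩)
        · exact mem_union_right _ (by rw [mem_incidenceFinset]; exact ⟨hfE, hwf⟩)
      calc Adj.card ≤ _ := card_le_card hsub
        _ ≤ (H.incidenceFinset u).card + (H.incidenceFinset v).card := card_union_le _ _
        _ ≤ D + D := by
            have hu := H.card_incidenceFinset_eq_degree (v := u)
            have hv := H.card_incidenceFinset_eq_degree (v := v)
            have hdu : H.degree u ≤ D := by
              have := hdeg u
              rwa [Set.ncard_eq_toFinset_card', ← neighborFinset_def] at this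
            have hdv : H.degree v ≤ D := by
              have := hdeg v
              rwa [Set.ncard_eq_toFinset_card', ← neighborFinset_def] at this
            omega
        _ = 2 * D := by omega
    -- allowed first colors
    set Aforb : Finset ℕ := Adj.image (fun f => (c f).1) with hAf
    have hAfcard : Aforb.card ≤ 2 * D := le_trans (card_image_le) hAdjcard
    set allowedA : Finset ℕ := (range K) \ Aforb with hallA
    have hallAcard : s + 1 ≤ allowedA.card := by
      have h1 : K - Aforb.card ≤ allowedA.card := by
        rw [hallA]
        simpa using le_card_sdiff Aforb (range K)
      omega
    -- choose a minimizing the class size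
    obtain ⟨a, haA, hamin⟩ := exists_min_image allowedA
      (fun a => (l.toFinset.filter (fun f => (c f).1 = a)).card)
      (card_pos.mp (lt_of_lt_of_le (Nat.succ_pos s) hallAcard))
    set cls : Finset (Sym2 (Fin n)) := l.toFinset.filter (fun f => (c f).1 = a) with hcls
    -- the chosen class is small
    have hclscard : cls.card ≤ s := by
      have hdisj : ∀ a₁ ∈ allowedA, ∀ a₂ ∈ allowedA, a₁ ≠ a₂ →
          Disjoint (l.toFinset.filter (fun f => (c f).1 = a₁))
            (l.toFinset.filter (fun f => (c f).1 = a₂)) := by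
        intro a₁ _ a₂ _ hne
        rw [Finset.disjoint_left]
        intro f hf1 hf2
        rw [mem_filter] at hf1 hf2
        exact hne (hf1.2 ▸ hf2.2 ▸ rfl)
      have hsum : ∑ a' ∈ allowedA, (l.toFinset.filter (fun f => (c f).1 = a')).card
          ≤ l.toFinset.card := by
        rw [← card_biUnion hdisj]
        refine card_le_card (fun f hf => ?_)
        obtain ⟨a', _, hf'⟩ := mem_biUnion.mp hf
        exact (mem_filter.mp hf').1
      have hlm : l.toFinset.card ≤ s * (s + 1) := by
        refine le_trans ?_ hm
        rw [← Set.ncard_coe_finset]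
        exact Set.ncard_le_ncard (fun f hf => hmem f
          (List.mem_cons_of_mem _ (List.mem_toFinset.mp hf))) (Set.toFinite _)
      have hlow : allowedA.card * cls.card ≤ ∑ a' ∈ allowedA, (l.toFinset.filter
          (fun f => (c f).1 = a')).card := by
        rw [← smul_eq_mul, ← Finset.sum_const]
        exact Finset.sum_le_sum (fun a' ha' => hamin a' ha')
      have : (s + 1) * cls.card ≤ s * (s + 1) := by
        calc (s + 1) * cls.card ≤ allowedA.card * cls.card :=
              Nat.mul_le_mul_right _ hallAcard
          _ ≤ _ := hlow
          _ ≤ _ := le_trans hsum hlm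
      nlinarith
    -- forbidden second colors
    set Bforb : Finset ℕ := Adj.image (fun f => (c f).2) ∪ cls.image (fun f => (c f).2)
      with hBf
    have hBfcard : Bforb.card ≤ 2 * D + s := by
      calc Bforb.card ≤ _ := card_union_le _ _
        _ ≤ 2 * D + s := by
            have := card_image_le (s := Adj) (f := fun f => (c f).2)
            have := card_image_le (s := cls) (f := fun f => (c f).2)
            omega
    set allowedB : Finset ℕ := (Ico K (2*K)) \ Bforb with hallB
    have hallBne : allowedB.Nonempty := by
      rw [← card_pos]
      have h1 : (Ico K (2*K)).card - Bforb.card ≤ allowedB.card := by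
        rw [hallB]
        simpa using le_card_sdiff Bforb (Ico K (2*K))
      rw [Nat.card_Ico] at h1
      omega
    obtain ⟨b, hbB⟩ := hallBne
    rw [hallB, mem_sdiff, Finset.mem_Ico] at hbB
    obtain ⟨⟨hbK, hb2K⟩, hbforb⟩ := hbB
    rw [hallA, mem_sdiff, mem_range] at haA
    obtain ⟨haK, haforb⟩ := haA
    have hkey1 : ∀ g ∈ l, (∃ v : Fin n, v ∈ e ∧ v ∈ g) → a ≠ (c g).1 ∧ b ≠ (c g).2 := by
      intro g hg hadj
      have hgAdj : g ∈ Adj := by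
        rw [hAdj, mem_filter]
        exact ⟨List.mem_toFinset.mpr hg, hadj⟩
      constructor
      · intro h
        exact haforb (mem_image.mpr ⟨g, hgAdj, h.symm⟩)
      · intro h
        exact hbforb (mem_union_left _ (mem_image.mpr ⟨g, hgAdj, h.symm⟩))
    have hkey2 : ∀ g ∈ l, (a, b) ≠ c g := by
      intro g hg h
      have hg1 : (c g).1 = a := by rw [← h]
      have hgcls : g ∈ cls := by
        rw [hcls, mem_filter]
        exact ⟨List.mem_toFinset.mpr hg, hg1⟩
      exact hbforb (mem_union_right _ (mem_image.mpr ⟨g, hgcls, by rw [← h]⟩))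
    refine ⟨fun f => if f = e then (a, b) else c f, ?_, ?_, ?_, ?_⟩
    · intro f hf
      rcases List.mem_cons.mp hf with heq | hf
      · simpa [heq] using haK
      · have hfe : f ≠ e := fun h => henl (h ▸ hf)
        simpa [hfe] using h1 f hf
    · intro f hf
      rcases List.mem_cons.mp hf with heq | hf
      · simpa [heq] using ⟨hbK, hb2K⟩
      · have hfe : f ≠ e := fun h => henl (h ▸ hf)
        simpa [hfe] using h2 f hf
    · intro f hf g hg hadj hne
      rcases List.mem_cons.mp hf with heq | hf <;> rcases List.mem_cons.mp hg with heq' | hg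
      · exact absurd (heq.trans heq'.symm) hne
      · have hge : g ≠ e := fun h => henl (h ▸ hg)
        have := hkey1 g hg (by subst heq; exact hadj)
        simpa [heq, hge] using this
      · have hfe : f ≠ e := fun h => henl (h ▸ hf)
        have := hkey1 f hf (by subst heq'; obtain ⟨v, h1', h2'⟩ := hadj; exact ⟨v, h2', h1'⟩)
        simp only [heq', if_pos rfl, if_neg hfe]
        exact ⟨this.1.symm, this.2.symm⟩
      · have hfe : f ≠ e := fun h => henl (h ▸ hf)
        have hge : g ≠ e := fun h => henl (h ▸ hg)
        simpa [hfe, hge] using h3 f hf g hg hadj hne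
    · intro f hf g hg hne
      rcases List.mem_cons.mp hf with heq | hf <;> rcases List.mem_cons.mp hg with heq' | hg
      · exact absurd (heq.trans heq'.symm) hne
      · have hge : g ≠ e := fun h => henl (h ▸ hg)
        simpa [heq, hge] using hkey2 g hg
      · have hfe : f ≠ e := fun h => henl (h ▸ hf)
        simpa [heq', hfe] using fun h => hkey2 f hf h.symm
      · have hfe : f ≠ e := fun h => henl (h ▸ hf)
        have hge : g ≠ e := fun h => henl (h ▸ hg)
        simpa [hfe, hge] using h4 f hf g hg hne

lemma length_filter_range_pair (a b : ℕ) (hab : a ≠ b) :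
    ∀ N, ((List.range N).filter (fun i => decide (i = a ∨ i = b))).length =
      (if a < N then 1 else 0) + (if b < N then 1 else 0) := by
  intro N
  induction N with
  | zero => simp
  | succ N ih =>
    rw [List.range_succ, List.filter_append, List.length_append, ih]
    by_cases h1 : N = a <;> by_cases h2 : N = b <;>
      simp [List.filter_singleton, h1, h2] <;> split_ifs <;> omega


open Finset in
/-- Any `n`-vertex graph `H` with `Δ(H) ≤ Δ` admits at most `300 √(Δn)` matchings
such that every edge of `H` lies in exactly two of them and any two of them share
at most one edge. -/
theorem separating_matchings (n : ℕ) (Δ : ℝ) (hΔ : 0 ≤ Δ) (H : SimpleGraph (Fin n))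
    (hdeg : ∀ v : Fin n, ((H.neighborSet v).ncard : ℝ) ≤ Δ) :
    ∃ Ms : List (Finset (Sym2 (Fin n))),
      ((Ms.length : ℝ) ≤ 300 * Real.sqrt (Δ * n)) ∧
      (∀ M ∈ Ms, IsMatchingIn H M) ∧
      -- (M1) each edge of H lies in exactly two of the matchings
      (∀ e ∈ H.edgeSet, (Ms.filter (fun M => e ∈ M)).length = 2) ∧
      -- (M2) any two of the matchings share at most one edge
      Ms.Pairwise (fun M M' => (M ∩ M').card ≤ 1) := by
  classical
  by_cases hE : H.edgeSet = ∅
  · refine ⟨[], by simpa using by positivity, by simp, ?_, by simp⟩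
    intro e he
    rw [hE] at he
    exact absurd he (Set.notMem_empty e)
  · obtain ⟨e₀, he₀⟩ := Set.nonempty_iff_ne_empty.mpr hE
    obtain ⟨⟨u₀, v₀⟩, he₀'⟩ := e₀.exists_rep
    have hadj0 : H.Adj u₀ v₀ := by
      rw [← SimpleGraph.mem_edgeSet]
      rw [← he₀'] at he₀
      exact he₀
    set D := Finset.univ.sup (fun v => H.degree v) with hD
    set m := H.edgeFinset.card with hm'
    set s := Nat.sqrt m + 1 with hs
    have hdegD : ∀ v, H.degree v ≤ D := fun v => Finset.le_sup (f := fun v => H.degree v) (Finset.mem_univ v)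
    have hncard_deg : ∀ v : Fin n, (H.neighborSet v).ncard = H.degree v := fun v => by
      rw [Set.ncard_eq_toFinset_card', ← neighborFinset_def]
      rfl
    have hDΔ : (D : ℝ) ≤ Δ := by
      obtain ⟨v, _, hv⟩ := Finset.exists_mem_eq_sup Finset.univ
        ⟨u₀, Finset.mem_univ _⟩ (fun v => H.degree v)
      rw [← hD] at hv
      rw [hv]
      have := hdeg v
      rwa [hncard_deg v] at this
    have hD1 : 1 ≤ D := by
      have : 0 < H.degree u₀ := by
        rw [← SimpleGraph.card_neighborFinset_eq_degree, Finset.card_pos]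
        exact ⟨v₀, by rwa [SimpleGraph.mem_neighborFinset]⟩
      exact le_trans this (hdegD u₀)
    have hn1 : 1 ≤ n := u₀.pos
    have hDn : D ≤ n := by
      apply Finset.sup_le
      intro v _
      have := H.degree_lt_card_verts v
      rw [Fintype.card_fin] at this
      omega
    have h2m : 2 * m ≤ D * n := by
      have hle : ∑ v, H.degree v ≤ Finset.univ.card • D :=
        Finset.sum_le_card_nsmul _ _ _ (fun v _ => hdegD v)
      rw [Finset.card_univ, Fintype.card_fin, smul_eq_mul] at hle
      rw [hm', ← H.sum_degrees_eq_twice_card_edges, Nat.mul_comm D n]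
      exact hle
    have hmE : H.edgeSet.ncard ≤ s * (s + 1) := by
      have h1 : H.edgeSet.ncard = m := by
        rw [Set.ncard_eq_toFinset_card']
        rw [hm']; congr 1
      have h2 : m < s * s := by
        have := Nat.lt_succ_sqrt m
        simpa [hs, Nat.succ_eq_add_one] using this
      have h3 : s * s ≤ s * (s + 1) := Nat.mul_le_mul_left _ (Nat.le_succ _)
      omega
    obtain ⟨c, hc1, hc2, hc3, hc4⟩ := exists_coloring H D s
      (fun v => (hncard_deg v).le.trans (hdegD v)) hmE
      H.edgeFinset.toList (Finset.nodup_toList _)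
      (fun e he => SimpleGraph.mem_edgeFinset.mp (Finset.mem_toList.mp he))
    simp only [Finset.mem_toList] at hc1 hc2 hc3 hc4
    set K := 2 * D + s + 1 with hK
    set Ms := (List.range (2 * K)).map
      (fun i => H.edgeFinset.filter (fun f => (c f).1 = i ∨ (c f).2 = i)) with hMs
    have hMslen : Ms.length = 2 * K := by simp [hMs]
    refine ⟨Ms, ?_, ?_, ?_, ?_⟩
    · -- length bound
      rw [hMslen]
      clear_value Ms
      clear hMs hMslen hc1 hc2 hc3 hc4
      clear_value D m s K
      set X := Real.sqrt (Δ * n) with hX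
      clear_value X
      have hXnn : 0 ≤ X := hX ▸ Real.sqrt_nonneg _
      have hDnR : (D : ℝ) * D ≤ Δ * n := by
        have h1 : (D : ℝ) ≤ Δ := hDΔ
        have h2 : (D : ℝ) ≤ n := by exact_mod_cast hDn
        have h3 : (0 : ℝ) ≤ D := Nat.cast_nonneg _
        nlinarith
      have hDX : (D : ℝ) ≤ X := by
        rw [hX, show ((D : ℝ)) = Real.sqrt (D * D) from
          (Real.sqrt_mul_self (Nat.cast_nonneg _)).symm]
        exact Real.sqrt_le_sqrt hDnR
      have hmR : (m : ℝ) ≤ Δ * n := by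
        have h1 : (2 * m : ℝ) ≤ (D : ℝ) * n := by exact_mod_cast h2m
        have h2 : (D : ℝ) * n ≤ Δ * n := by
          apply mul_le_mul_of_nonneg_right hDΔ (Nat.cast_nonneg _)
        have : (0:ℝ) ≤ m := Nat.cast_nonneg _
        linarith
      have hsqX : ((Nat.sqrt m : ℕ) : ℝ) ≤ X := by
        have h1 : ((Nat.sqrt m : ℕ) : ℝ) ^ 2 ≤ (m : ℝ) := by
          exact_mod_cast Nat.sqrt_le' m
        rw [hX, show (((Nat.sqrt m : ℕ) : ℝ)) = Real.sqrt (((Nat.sqrt m : ℕ) : ℝ) ^ 2)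
          from (Real.sqrt_sq (Nat.cast_nonneg _)).symm]
        exact Real.sqrt_le_sqrt (le_trans h1 hmR)
      have h1X : 1 ≤ X := by
        rw [hX]
        rw [show (1:ℝ) = Real.sqrt 1 from (Real.sqrt_one).symm]
        apply Real.sqrt_le_sqrt
        have h1 : (1 : ℝ) ≤ (D : ℝ) * n := by
          have : (1 : ℕ) ≤ D * n := Nat.mul_le_mul hD1 hn1
          exact_mod_cast this
        have h2 : (D : ℝ) * n ≤ Δ * n :=
          mul_le_mul_of_nonneg_right hDΔ (Nat.cast_nonneg _)
        linarith
      have : ((2 * K : ℕ) : ℝ) = 4 * (D:ℝ) + 2 * ((Nat.sqrt m : ℕ) : ℝ) + 4 := by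
        rw [hK, hs]
        push_cast
        ring
      rw [this]
      linarith
    · -- matchings
      intro M hM
      rw [hMs, List.mem_map] at hM
      obtain ⟨i, hi, rfl⟩ := hM
      constructor
      · intro x hx
        have hx' := Finset.mem_filter.mp (Finset.mem_coe.mp hx)
        exact SimpleGraph.mem_edgeFinset.mp hx'.1
      · intro e he f hf hne v hve hvf
        have heF := Finset.mem_filter.mp he
        have hfF := Finset.mem_filter.mp hf
        have h3 := hc3 e heF.1 f hfF.1 ⟨v, hve, hvf⟩ hne
        have h1e := hc1 e heF.1
        have h1f := hc1 f hfF.1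
        have h2e := hc2 e heF.1
        have h2f := hc2 f hfF.1
        have la := heF.2
        have lb := hfF.2
        omega
    · -- M1
      intro e he
      have heF : e ∈ H.edgeFinset := SimpleGraph.mem_edgeFinset.mpr he
      have ha := hc1 e heF
      have hb := hc2 e heF
      rw [hMs, List.filter_map, List.length_map]
      rw [List.filter_congr (l := List.range (2*K))
        (q := fun i => decide (i = (c e).1 ∨ i = (c e).2)) ?_]
      · rw [length_filter_range_pair _ _ (by omega) (2*K), if_pos (by omega), if_pos (by omega)]
      · intro i _
        simp only [Function.comp_apply, decide_eq_decide, Finset.mem_filter]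
        constructor
        · rintro ⟨-, h | h⟩
          · exact Or.inl h.symm
          · exact Or.inr h.symm
        · rintro (rfl | rfl)
          · exact ⟨heF, Or.inl rfl⟩
          · exact ⟨heF, Or.inr rfl⟩
    · -- M2
      rw [hMs, List.pairwise_map]
      refine (List.pairwise_lt_range (n := 2*K)).imp ?_
      intro i j hij
      by_contra hgt
      obtain ⟨x, hx, y, hy, hxy⟩ := Finset.one_lt_card.mp (lt_of_not_ge hgt)
      obtain ⟨hxi, hxj⟩ := Finset.mem_inter.mp hx
      obtain ⟨hyi, hyj⟩ := Finset.mem_inter.mp hy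
      have hxiF := Finset.mem_filter.mp hxi
      have hxjF := Finset.mem_filter.mp hxj
      have hyiF := Finset.mem_filter.mp hyi
      have hyjF := Finset.mem_filter.mp hyj
      refine hc4 x hxiF.1 y hyiF.1 hxy (Prod.ext ?_ ?_)
      · have b1 := hc1 x hxiF.1
        have b2 := hc1 y hyiF.1
        have b3 := hc2 x hxiF.1
        have b4 := hc2 y hyiF.1
        have := hxiF.2
        have := hxjF.2
        have := hyiF.2
        have := hyjF.2
        omega
      · have b1 := hc1 x hxiF.1
        have b2 := hc1 y hyiF.1
        have b3 := hc2 x hxiF.1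
        have b4 := hc2 y hyiF.1
        have := hxiF.2
        have := hxjF.2
        have := hyiF.2
        have := hyjF.2
        omega
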